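/- arXiv:1808.08111 — 3 statements merged into one kernel-verified Lean document; each statement's English description precedes it below -/
import Mathlib

section
/- Under the Crammer–Singer KKT conditions, for a Type 1 support vector i (0 < α_{iy_i} < C_i) and any class k ≠ y_i with α_{ik} < 0, the equality Σ_j α_{jk}⟨x_i,x_j⟩ + e_{ik} = Σ_j α_{jy_i}⟨x_i,x_j⟩ + e_{iy_i} holds, i.e. the projections onto classes with strictly negative dual variables equal the projection onto the true class. -/
open Finset

/-- Lemma A.1(ii): for a Type 1 support vector `i` and any class `k ≠ y_i` with
`α_{ik} < 0`, the projection on class `k` equals the projection on the true class: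
`Σ_j α_{jk} ⟨x_i, x_j⟩ + e_{ik} = Σ_j α_{j y_i} ⟨x_i, x_j⟩ + e_{i y_i}`. -/
theorem lemmaA1_ii (n L d : ℕ) (x : Fin n → Fin d → ℝ) (y : Fin n → Fin L)
    (Cc : Fin n → ℝ) (η : Fin n → Fin L → ℝ) (ξ : Fin n → ℝ)
    (α : Fin n → Fin L → ℝ) (e : Fin n → Fin L → ℝ) (w : Fin L → Fin d → ℝ)
    (hCc : ∀ i, 0 < Cc i)
    (hα : ∀ i l, α i l = Cc i * (if l = y i then 1 else 0) - η i l)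
    (he : ∀ i l, e i l = 1 - (if l = y i then 1 else 0))
    (hw : ∀ l r, w l r = ∑ j, α j l * x j r)
    (hη : ∀ i l, 0 ≤ η i l) (hsum : ∀ i, ∑ l, η i l = Cc i)
    (hξ : ∀ i, 0 ≤ ξ i)
    (hfeas : ∀ i l, (∑ r, (w (y i) r - w l r) * x i r) ≥ e i l - ξ i)
    (hcs : ∀ i l, η i l * ((∑ r, (w (y i) r - w l r) * x i r) - e i l + ξ i) = 0)
    (i : Fin n) (hSV1 : 0 < α i (y i) ∧ α i (y i) < Cc i)
    (k : Fin L) (hk : k ≠ y i) (hneg : α i k < 0) :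
    (∑ j, α j k * (∑ r, x i r * x j r)) + e i k
      = (∑ j, α j (y i) * (∑ r, x i r * x j r)) + e i (y i) := by
  -- ξ i = 0 from Type 1
  have hηy : 0 < η i (y i) := by
    have := hα i (y i); simp at this
    linarith [hSV1.2]
  have hey : e i (y i) = 0 := by simp [he i (y i)]
  have hξ0 : ξ i = 0 := by
    have h := hcs i (y i)
    simp [hey] at h
    rcases h with h | h
    · linarith
    · exact h
  -- η i k > 0
  have hηk : 0 < η i k := by
    have := hα i k; simp [hk] at this; linarith
  have hkey : (∑ r, (w (y i) r - w k r) * x i r) = e i k := by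
    have h := hcs i k
    rcases mul_eq_zero.1 h with h' | h'
    · linarith
    · linarith [h']
  -- rewrite sums
  have hS : ∀ l, (∑ r, w l r * x i r) = ∑ j, α j l * (∑ r, x i r * x j r) := by
    intro l
    simp only [hw, Finset.sum_mul]
    rw [Finset.sum_comm]
    congr 1; ext j
    rw [Finset.mul_sum]; congr 1; ext r; ring
  have hsplit : (∑ r, (w (y i) r - w k r) * x i r)
      = (∑ r, w (y i) r * x i r) - (∑ r, w k r * x i r) := by
    rw [← Finset.sum_sub_distrib]; congr 1; ext r; ring
  rw [hsplit, hS, hS] at hkey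
  rw [hey]
  linarith
end

section
/- Under the Crammer–Singer KKT conditions, let i be a Type 1 support vector and let γ_i : Fin L → ℝ satisfy Σ_k γ_{ik} = 0 and γ_{ik} = 0 whenever α_{ik} = 0 and k ≠ y_i. Then Σ_k γ_{ik}[Σ_j α_{jk}⟨x_i,x_j⟩ + e_{ik}] = 0. -/
open Finset

/-- Lemma A.1(iii): for a Type 1 support vector `i` and any `γ_i` with `Σ_k γ_{ik} = 0`
and `γ_{ik} = 0` whenever `α_{ik} = 0` and `k ≠ y_i`, we have
`Σ_k γ_{ik} [Σ_j α_{jk} ⟨x_i, x_j⟩ + e_{ik}] = 0`. -/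
theorem lemmaA1_iii (n L d : ℕ) (x : Fin n → Fin d → ℝ) (y : Fin n → Fin L)
    (Cc : Fin n → ℝ) (η : Fin n → Fin L → ℝ) (ξ : Fin n → ℝ)
    (α : Fin n → Fin L → ℝ) (e : Fin n → Fin L → ℝ) (w : Fin L → Fin d → ℝ)
    (hCc : ∀ i, 0 < Cc i)
    (hα : ∀ i l, α i l = Cc i * (if l = y i then 1 else 0) - η i l)
    (he : ∀ i l, e i l = 1 - (if l = y i then 1 else 0))
    (hw : ∀ l r, w l r = ∑ j, α j l * x j r)
    (hη : ∀ i l, 0 ≤ η i l) (hsum : ∀ i, ∑ l, η i l = Cc i)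
    (hξ : ∀ i, 0 ≤ ξ i)
    (hfeas : ∀ i l, (∑ r, (w (y i) r - w l r) * x i r) ≥ e i l - ξ i)
    (hcs : ∀ i l, η i l * ((∑ r, (w (y i) r - w l r) * x i r) - e i l + ξ i) = 0)
    (i : Fin n) (hSV1 : 0 < α i (y i) ∧ α i (y i) < Cc i)
    (γi : Fin L → ℝ) (hγsum : ∑ k, γi k = 0)
    (hγzero : ∀ k, α i k = 0 → k ≠ y i → γi k = 0) :
    ∑ k, γi k * ((∑ j, α j k * (∑ r, x i r * x j r)) + e i k) = 0 := by
  -- ⟨w l, x i⟩ = Σ_j α j l ⟨x i, x j⟩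
  have hwx : ∀ l, (∑ r, w l r * x i r) = ∑ j, α j l * (∑ r, x i r * x j r) := by
    intro l
    simp only [hw, Finset.sum_mul]
    rw [Finset.sum_comm]
    exact Finset.sum_congr rfl fun j _ => by rw [Finset.mul_sum]; exact Finset.sum_congr rfl fun r _ => by ring
  set S := ∑ j, α j (y i) * (∑ r, x i r * x j r) with hS
  -- η i (y i) > 0
  have hηpos : 0 < η i (y i) := by
    have := hα i (y i); simp at this
    have := hSV1.2; rw [hα i (y i)] at this; simp at this; linarith
  -- ξ i = 0
  have hξ0 : ξ i = 0 := by
    have hcs1 := hcs i (y i)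
    have he1 : e i (y i) = 0 := by rw [he]; simp
    have : (∑ r, (w (y i) r - w (y i) r) * x i r) = 0 := by simp
    rw [this, he1] at hcs1
    simp at hcs1
    rcases hcs1 with h | h
    · exact absurd h (ne_of_gt hηpos)
    · exact h
  -- each bracket equals S when γ_k ≠ 0
  have key : ∀ k, γi k * ((∑ j, α j k * (∑ r, x i r * x j r)) + e i k) = γi k * S := by
    intro k
    by_cases hk : k = y i
    · rw [hk]
      have : e i (y i) = 0 := by rw [he]; simp
      rw [this, add_zero]
    · by_cases hγ : γi k = 0
      · rw [hγ]; ring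
      · have hαk : α i k ≠ 0 := fun h => hγ (hγzero k h hk)
        have hηk : 0 < η i k := by
          rw [hα i k, if_neg hk] at hαk
          have := hη i k
          rcases lt_or_eq_of_le this with h | h
          · exact h
          · exfalso; apply hαk; rw [← h]; ring
        have hcsk := hcs i k
        have : (∑ r, (w (y i) r - w k r) * x i r) - e i k + ξ i = 0 := by
          rcases mul_eq_zero.mp hcsk with h | h
          · exact absurd h (ne_of_gt hηk)
          · exact h
        rw [hξ0, add_zero, sub_eq_zero] at this
        have hsplit : (∑ r, (w (y i) r - w k r) * x i r)
            = (∑ r, w (y i) r * x i r) - (∑ r, w k r * x i r) := by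
          rw [← Finset.sum_sub_distrib]
          exact Finset.sum_congr rfl fun r _ => by ring
        rw [hsplit, hwx, hwx] at this
        have : (∑ j, α j k * (∑ r, x i r * x j r)) + e i k = S := by
          rw [hS]; linarith
        rw [this]
  calc ∑ k, γi k * ((∑ j, α j k * (∑ r, x i r * x j r)) + e i k)
      = ∑ k, γi k * S := Finset.sum_congr rfl fun k _ => key k
    _ = (∑ k, γi k) * S := by rw [Finset.sum_mul]
    _ = 0 := by rw [hγsum, zero_mul]
end

section
/- Under Assumption (ii) (the leave-one-out solution misclassifies sample t, i.e. max_{q≠y_t} Σ_j α^t_{jq} K(x_j,x_t) ≥ Σ_j α^t_{jy_t} K(x_j,x_t)) and with α_t supported as α_{ty_t} > 0, α_{tk} = -α_{ty_t} for k = argmax_{q≠y_t} Σ_j α^t_{jq}K(x_j,x_t), α_{tl}=0 otherwise, the quantity -Σ_l α_{tl} [Σ_j α^t_{jl} K(x_j,x_t)] = α_{ty_t}[Σ_j α^t_{jk}K(x_j,x_t) - Σ_j α^t_{jy_t}K(x_j,x_t)] ≥ 0, and hence S_t² = Σ_l α_{tl}Σ_j α_{jl}K(x_j,x_t) - Σ_l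 α_{tl}Σ_j α^t_{jl}K(x_j,x_t) ≥ Σ_l α_{tl}[Σ_j α_{jl} K(x_j,x_t)]. -/
open Finset

/-- Final step of Lemma 2: under the misclassification assumption and with `α_t`
supported on the true class `y` and the offending class `k`
(`α_{ty} = a ≥ 0`, `α_{tk} = -a`), the cross term
`-Σ_l α_{tl} Σ_j α^t_{jl} K(x_j,x_t) = a (Σ_j α^t_{jk} κ_j - Σ_j α^t_{jy} κ_j) ≥ 0`,
hence `S_t² ≥ Σ_l α_{tl} Σ_j α_{jl} K(x_j,x_t)`. -/
theorem span_lower_bound (n L : ℕ) (κ : Fin n → ℝ)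
    (α αt : Fin n → Fin L → ℝ) (t : Fin n) (y k : Fin L) (a : ℝ)
    (hk : k ≠ y) (ha : 0 ≤ a)
    (hsupp_y : α t y = a) (hsupp_k : α t k = -a)
    (hsupp_zero : ∀ l, l ≠ y → l ≠ k → α t l = 0)
    (hargmax : ∀ q, q ≠ y → ∑ j, αt j q * κ j ≤ ∑ j, αt j k * κ j)
    (hmis : ∑ j, αt j y * κ j ≤ ∑ j, αt j k * κ j)
    (St2 : ℝ)
    (hSt : St2 = (∑ l, α t l * ∑ j, α j l * κ j)
        - (∑ l, α t l * ∑ j, αt j l * κ j)) :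
    (-(∑ l, α t l * ∑ j, αt j l * κ j)
        = a * ((∑ j, αt j k * κ j) - ∑ j, αt j y * κ j)) ∧
    (0 ≤ -(∑ l, α t l * ∑ j, αt j l * κ j)) ∧
    St2 ≥ ∑ l, α t l * ∑ j, α j l * κ j := by
  have key : ∀ c : Fin L → ℝ, (∑ l, α t l * c l) = a * c y + (-a) * c k := by
    intro c
    have hsub : ({y, k} : Finset (Fin L)) ⊆ univ := subset_univ _
    rw [← Finset.sum_subset hsub (by
      intro l _ hl
      simp only [mem_insert, mem_singleton, not_or] at hl
      rw [hsupp_zero l hl.1 hl.2, zero_mul])]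
    rw [Finset.sum_pair (Ne.symm hk), hsupp_y, hsupp_k]
  have h1 : -(∑ l, α t l * ∑ j, αt j l * κ j)
      = a * ((∑ j, αt j k * κ j) - ∑ j, αt j y * κ j) := by
    rw [key (fun l => ∑ j, αt j l * κ j)]; ring
  have h2 : 0 ≤ -(∑ l, α t l * ∑ j, αt j l * κ j) := by
    rw [h1]; exact mul_nonneg ha (by linarith)
  exact ⟨h1, h2, by rw [hSt]; linarith⟩
end
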